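/- For every d ≥ 2, every n ∈ (0,∞) and every λ ∈ (0, 1/μ), where μ = μ(ℤ^d) is the connective constant, there exists δ > 0 such that L(δ, λ, n) < ∞; consequently λ_c(n) ≥ 1/μ for every n ∈ (0,∞). -/

import Mathlib

open scoped BigOperators ENNReal

/-- Vertices of the lattice `ℤ^d`. -/
abbrev Vtx (d : ℕ) := Fin d → ℤ

/-- Lattice adjacency: Euclidean distance one. -/
def latAdj {d : ℕ} (x y : Vtx d) : Prop := (∑ i, (x i - y i) ^ 2) = 1

/-- The hypercubic lattice `ℤ^d` as a simple graph. -/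
def latticeGraph (d : ℕ) : SimpleGraph (Vtx d) where
  Adj := latAdj
  symm := by
    constructor
    intro x y h
    unfold latAdj at h ⊢
    calc (∑ i, (y i - x i) ^ 2) = ∑ i, (x i - y i) ^ 2 :=
          Finset.sum_congr rfl fun i _ => by ring
      _ = 1 := h
  loopless := by
    constructor
    intro x h
    unfold latAdj at h
    simp at h

/-- The `i`-th standard unit vector of `ℤ^d`. -/
def stdv (d : ℕ) (i : ℕ) : Vtx d := fun j => if (j : ℕ) = i then 1 else 0

/-- A finite domain: a finite subgraph of the lattice containing all lattice edges
between its vertices. -/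
def IsFiniteDomain {d : ℕ} (G : (latticeGraph d).Subgraph) : Prop :=
  G.verts.Finite ∧ ∀ x ∈ G.verts, ∀ y ∈ G.verts, (latticeGraph d).Adj x y → G.Adj x y

/-- `Ω_G`: spanning subgraphs of `G` in which every vertex has degree `0` or `2`. -/
def loopConfigs {d : ℕ} (G : (latticeGraph d).Subgraph) : Set ((latticeGraph d).Subgraph) :=
  {κ | κ ≤ G ∧ κ.verts = G.verts ∧
    ∀ v ∈ κ.verts, (κ.neighborSet v).ncard = 0 ∨ (κ.neighborSet v).ncard = 2}

/-- `L(κ)`: the number of loops of `κ`, i.e. of connected components containing an edge. -/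
noncomputable def numLoops {d : ℕ} (κ : (latticeGraph d).Subgraph) : ℕ :=
  Set.ncard {C : κ.spanningCoe.ConnectedComponent | ∃ e ∈ κ.edgeSet, ∀ v ∈ e, v ∈ C.supp}

/-- The weight `λ^{o(κ)} n^{L(κ)}` of a configuration (with the convention `0^0 = 1`). -/
noncomputable def loopWt {d : ℕ} (lam n : ℝ) (κ : (latticeGraph d).Subgraph) : ℝ :=
  lam ^ κ.edgeSet.ncard * n ^ numLoops κ

/-- The partition function `Z_{λ,n}(G)`. -/
noncomputable def partitionZ {d : ℕ} (lam n : ℝ) (G : (latticeGraph d).Subgraph) : ℝ :=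
  ∑' κ : loopConfigs G, loopWt lam n κ.1

/-- The probability, under the loop `O(n)` measure on `Ω_G`, of an event `A`. -/
noncomputable def probEvent {d : ℕ} (lam n : ℝ) (G : (latticeGraph d).Subgraph)
    (A : (latticeGraph d).Subgraph → Prop) : ℝ :=
  (∑' κ : {κ : (latticeGraph d).Subgraph // κ ∈ loopConfigs G ∧ A κ}, loopWt lam n κ.1) /
    partitionZ lam n G

/-- The set of edges of the connected component of `x` in `κ`. -/
def compEdgeSet {d : ℕ} (κ : (latticeGraph d).Subgraph) (x : Vtx d) : Set (Sym2 (Vtx d)) :=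
  {e | e ∈ κ.edgeSet ∧ ∀ v ∈ e, κ.spanningCoe.Reachable x v}

/-- `|P_x(κ)|`: the number of edges of the connected component of `x` in `κ`. -/
noncomputable def compLen {d : ℕ} (κ : (latticeGraph d).Subgraph) (x : Vtx d) : ℕ :=
  (compEdgeSet κ x).ncard

/-- `P_x(κ)`: the connected component of `x` in `κ`, as a subgraph of the lattice. -/
def compSubgraph {d : ℕ} (κ : (latticeGraph d).Subgraph) (x : Vtx d) :
    (latticeGraph d).Subgraph where
  verts := {v | v ∈ κ.verts ∧ κ.spanningCoe.Reachable x v}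
  Adj u v := κ.Adj u v ∧ κ.spanningCoe.Reachable x u
  adj_sub h := κ.adj_sub h.1
  edge_vert h := ⟨κ.edge_vert h.1, h.2⟩
  symm := by
    constructor
    intro u v h
    exact ⟨κ.adj_symm h.1, h.2.trans (SimpleGraph.Adj.reachable (G := κ.spanningCoe) h.1)⟩

/-- A self-avoiding walk with `M` vertices (length `M - 1`) starting at `x`. -/
def IsSAWalk {d M : ℕ} (x : Vtx d) (ω : Fin M → Vtx d) : Prop :=
  (∀ h : 0 < M, ω ⟨0, h⟩ = x) ∧ Function.Injective ω ∧
    ∀ i : ℕ, ∀ h : i + 1 < M, latAdj (ω ⟨i, by omega⟩) (ω ⟨i + 1, h⟩)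

/-- A pattern: a finite walk `(p 0, …, p len)` (to be used as a self-avoiding walk). -/
structure SAWPattern (d : ℕ) where
  len : ℕ
  p : Fin (len + 1) → Vtx d

/-- The pattern `P` occurs at step `j` of the walk `ω`. -/
def occursAt {d M : ℕ} (P : SAWPattern d) (ω : Fin M → Vtx d) (j : ℕ) : Prop :=
  ∃ (h : j + P.len + 1 ≤ M) (v : Vtx d), ∀ k : Fin (P.len + 1),
    ω ⟨j + k.1, by have hk := k.2; omega⟩ = P.p k + v

/-- The number of steps of `ω` at which the pattern `P` occurs. -/
noncomputable def numOcc {d M : ℕ} (P : SAWPattern d) (ω : Fin M → Vtx d) : ℕ :=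
  Set.ncard {j : ℕ | occursAt P ω j}

/-- A proper internal pattern: for every `k` there is a self-avoiding walk on which the
pattern occurs at `k` or more different steps. -/
def ProperInternal {d : ℕ} (P : SAWPattern d) : Prop :=
  ∀ k : ℕ, ∃ (x : Vtx d) (M : ℕ) (ω : Fin (M + 1) → Vtx d), IsSAWalk x ω ∧ k ≤ numOcc P ω

/-- `|SAW_x(N)|`: the number of `N`-step self-avoiding walks starting at `x`. -/
noncomputable def numSAW (d : ℕ) (x : Vtx d) (N : ℕ) : ℕ :=
  Nat.card {ω : Fin (N + 1) → Vtx d // IsSAWalk x ω}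

/-- `|SAW_x[N, w, P]|`: the number of `N`-step self-avoiding walks starting at `x` on which
the pattern `P` occurs at fewer than `w` steps. -/
noncomputable def numSAWFewOcc (d : ℕ) (x : Vtx d) (N : ℕ) (w : ℝ) (P : SAWPattern d) : ℕ :=
  Nat.card {ω : Fin (N + 1) → Vtx d // IsSAWalk x ω ∧ (numOcc P ω : ℝ) < w}

/-- The connective constant `μ(ℤ^d) = lim_N |SAW_0(N)|^{1/N}` (the limit exists, hence
equals the `limsup`). -/
noncomputable def connConst (d : ℕ) : ℝ :=
  Filter.limsup (fun N : ℕ => (numSAW d 0 N : ℝ) ^ ((N : ℝ)⁻¹)) Filter.atTop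

/-- The pattern `P' = (o, e₂, e₁ + e₂, e₁)`. -/
def patternP' (d : ℕ) : SAWPattern d :=
  ⟨3, ![0, stdv d 1, stdv d 0 + stdv d 1, stdv d 0]⟩

/-- `P ∈ SAP_x(N)`: `P` is an `N`-step self-avoiding polygon one of whose vertices is `x`;
for `N = 1` the degenerate polygon `{x}`, for `N ≥ 4` a single cycle with `N` vertices and
`N` edges. -/
def IsSAP {d : ℕ} (x : Vtx d) (N : ℕ) (P : (latticeGraph d).Subgraph) : Prop :=
  (N = 1 ∧ P.verts = {x} ∧ P.edgeSet = ∅) ∨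
  (4 ≤ N ∧ x ∈ P.verts ∧ P.verts.ncard = N ∧ P.edgeSet.ncard = N ∧
    (∀ v ∈ P.verts, (P.neighborSet v).ncard = 2) ∧
    ∀ u ∈ P.verts, ∀ v ∈ P.verts, P.spanningCoe.Reachable u v)

/-- The walk `ω` (with `N` vertices) traces the `N`-step self-avoiding polygon `P`,
starting at `x`. -/
def Traces {d : ℕ} (x : Vtx d) (N : ℕ) (P : (latticeGraph d).Subgraph)
    (ω : Fin N → Vtx d) : Prop :=
  IsSAWalk x ω ∧ (∀ v, v ∈ P.verts ↔ ∃ i, ω i = v) ∧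
    (∀ i : ℕ, ∀ h : i + 1 < N, P.Adj (ω ⟨i, by omega⟩) (ω ⟨i + 1, h⟩)) ∧
    ∀ h : 0 < N, P.Adj (ω ⟨N - 1, by omega⟩) (ω ⟨0, h⟩)

/-- `G ∖ P`: the subgraph of `G` induced on `V_G ∖ V_P`. -/
def graphDiff {d : ℕ} (G P : (latticeGraph d).Subgraph) : (latticeGraph d).Subgraph where
  verts := G.verts \ P.verts
  Adj u v := G.Adj u v ∧ u ∉ P.verts ∧ v ∉ P.verts
  adj_sub h := G.adj_sub h.1
  edge_vert h := ⟨G.edge_vert h.1, h.2.1⟩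
  symm := ⟨fun _ _ h => ⟨G.adj_symm h.1, h.2.2, h.2.1⟩⟩

/-- The subgraph of `G` induced on a vertex set `S` (used for `U(P)` with `S = V_P`). -/
def inducedOn {d : ℕ} (G : (latticeGraph d).Subgraph) (S : Set (Vtx d)) :
    (latticeGraph d).Subgraph where
  verts := S
  Adj u v := G.Adj u v ∧ u ∈ S ∧ v ∈ S
  adj_sub h := G.adj_sub h.1
  edge_vert h := h.2.1
  symm := ⟨fun _ _ h => ⟨G.adj_symm h.1, h.2.2, h.2.1⟩⟩

/-- The unit-square polygon with corner `x`: vertices `x, x+e₁, x+e₂, x+e₁+e₂` and the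
four lattice edges between them. -/
def unitSquare (d : ℕ) (x : Vtx d) : (latticeGraph d).Subgraph where
  verts := {x, x + stdv d 0, x + stdv d 1, x + stdv d 0 + stdv d 1}
  Adj u v := (latticeGraph d).Adj u v ∧
    u ∈ ({x, x + stdv d 0, x + stdv d 1, x + stdv d 0 + stdv d 1} : Set (Vtx d)) ∧
    v ∈ ({x, x + stdv d 0, x + stdv d 1, x + stdv d 0 + stdv d 1} : Set (Vtx d))
  adj_sub h := h.1
  edge_vert h := h.2.1
  symm := ⟨fun _ _ h => ⟨h.1.symm, h.2.2, h.2.1⟩⟩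

/-- `E_{G,λ,n}[e^{δ |P_x|}]`. -/
noncomputable def expMoment {d : ℕ} (δ lam n : ℝ) (G : (latticeGraph d).Subgraph)
    (x : Vtx d) : ℝ :=
  (∑' κ : loopConfigs G, Real.exp (δ * (compLen κ.1 x : ℝ)) * loopWt lam n κ.1) /
    partitionZ lam n G

/-- `L(δ, λ, n)`: the supremum of `E_{G,λ,n}[e^{δ |P_x|}]` over finite domains `G ⊆ ℤ^d`
and `x ∈ V_G`, valued in `[0,∞]`. -/
noncomputable def mathcalL (d : ℕ) (δ lam n : ℝ) : ℝ≥0∞ :=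
  ⨆ (G : (latticeGraph d).Subgraph) (_ : IsFiniteDomain G) (x : Vtx d) (_ : x ∈ G.verts),
    ENNReal.ofReal (expMoment δ lam n G x)

/-- `λ_c(n) = sup {λ ≥ 0 : L(δ,λ,n) < ∞ for some δ > 0}`, valued in `[0,∞]`. -/
noncomputable def lambdaC (d : ℕ) (n : ℝ) : ℝ≥0∞ :=
  ⨆ (lam : ℝ) (_ : 0 ≤ lam ∧ ∃ δ : ℝ, 0 < δ ∧ mathcalL d δ lam n < ⊤),
    ENNReal.ofReal lam
/-! ### Section A : counting self-avoiding walks, the connective constant -/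

section SectA

variable {d : ℕ}

lemma latAdj_sub {x y v : Vtx d} (h : latAdj x y) : latAdj (x - v) (y - v) := by
  unfold latAdj at h ⊢
  calc (∑ i, ((x - v) i - (y - v) i) ^ 2) = ∑ i, (x i - y i) ^ 2 := by
        apply Finset.sum_congr rfl; intro i _; simp only [Pi.sub_apply]; ring
    _ = 1 := h

lemma latAdj_sub_iff {x y v : Vtx d} : latAdj (x - v) (y - v) ↔ latAdj x y := by
  constructor
  · intro h
    have := latAdj_sub (v := -v) h
    simpa using this
  · exact latAdj_sub

/-- The set of lattice unit vectors is finite. -/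
lemma unitV_finite (d : ℕ) : Set.Finite {v : Vtx d | latAdj v 0} := by
  apply Set.Finite.subset (Set.Finite.pi (fun i : Fin d => Set.finite_Icc (-1 : ℤ) 1))
  intro v hv
  simp only [Set.mem_pi, Set.mem_univ, forall_true_left]
  intro i
  simp only [Set.mem_Icc]
  have h : (∑ j, (v j - (0:Vtx d) j) ^ 2) = 1 := hv
  have h1 : (v i) ^ 2 ≤ 1 := by
    have := Finset.single_le_sum (f := fun j => (v j - (0:Vtx d) j) ^ 2)
      (fun j _ => sq_nonneg _) (Finset.mem_univ i)
    simp only [Pi.zero_apply, sub_zero] at this h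
    omega
  constructor <;> nlinarith [h1, sq_nonneg (v i + 1), sq_nonneg (v i - 1)]

noncomputable instance (d : ℕ) : Fintype {v : Vtx d // latAdj v 0} :=
  (unitV_finite d).fintype

/-- Number of lattice unit vectors. -/
noncomputable def unitCard (d : ℕ) : ℕ := Nat.card {v : Vtx d // latAdj v 0}

lemma one_le_unitCard (hd : 1 ≤ d) : 1 ≤ unitCard d := by
  have hmem : latAdj (stdv d 0) (0 : Vtx d) := by
    unfold latAdj stdv
    have h0 : (⟨0, hd⟩ : Fin d) ∈ Finset.univ := Finset.mem_univ _
    rw [Finset.sum_eq_single (⟨0, hd⟩ : Fin d)]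
    · simp
    · intro b _ hb
      have : (b : ℕ) ≠ 0 := by
        intro hc; exact hb (Fin.ext hc)
      simp [this]
    · intro hc; exact absurd h0 hc
  have : Nonempty {v : Vtx d // latAdj v 0} := ⟨⟨stdv d 0, hmem⟩⟩
  exact Nat.one_le_iff_ne_zero.mpr (Nat.card_ne_zero.mpr ⟨this, inferInstance⟩)

/-- The map sending a SAW to its sequence of steps, recording injectivity data. -/
lemma saw_steps_inj (x : Vtx d) (N : ℕ) :
    ∃ F : {ω : Fin (N + 1) → Vtx d // IsSAWalk x ω} →
        (Fin N → {v : Vtx d // latAdj v 0}),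
      Function.Injective F := by
  classical
  refine ⟨fun ω i => ⟨ω.1 i.succ - ω.1 i.castSucc, ?_⟩, ?_⟩
  · have h := ω.2.2.2 i.1 (by omega : i.1 + 1 < N + 1)
    have : latAdj (ω.1 i.succ) (ω.1 i.castSucc) := by
      have hsucc : (⟨i.1 + 1, by omega⟩ : Fin (N+1)) = i.succ := rfl
      have hcast : (⟨i.1, by omega⟩ : Fin (N+1)) = i.castSucc := rfl
      rw [hsucc, hcast] at h
      -- h : latAdj (ω.1 i.castSucc) (ω.1 i.succ); need symmetry
      unfold latAdj at h ⊢
      calc (∑ j, (ω.1 i.succ j - ω.1 i.castSucc j) ^ 2)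
          = ∑ j, (ω.1 i.castSucc j - ω.1 i.succ j) ^ 2 := by
            apply Finset.sum_congr rfl; intro j _; ring
        _ = 1 := h
    have := latAdj_sub (v := ω.1 i.castSucc) this
    simpa using this
  · intro ω₁ ω₂ hF
    apply Subtype.ext
    funext k
    induction k using Fin.induction with
    | zero =>
        rw [show (0 : Fin (N+1)) = ⟨0, by omega⟩ from rfl, ω₁.2.1 (by omega), ω₂.2.1 (by omega)]
    | succ i ih =>
        have h1 := congrFun hF i
        have h2 := congrArg Subtype.val h1
        simp only at h2
        have h3 := congrFun h2
        have : ω₁.1 i.succ = ω₁.1 i.castSucc + (ω₁.1 i.succ - ω₁.1 i.castSucc) := by ring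
        rw [this, h2, ih]
        ring

instance sawFinite (x : Vtx d) (N : ℕ) :
    Finite {ω : Fin (N + 1) → Vtx d // IsSAWalk x ω} := by
  obtain ⟨F, hF⟩ := saw_steps_inj x N
  exact Finite.of_injective F hF

lemma numSAW_le (x : Vtx d) (N : ℕ) : numSAW d x N ≤ unitCard d ^ N := by
  obtain ⟨F, hF⟩ := saw_steps_inj x N
  calc numSAW d x N ≤ Nat.card (Fin N → {v : Vtx d // latAdj v 0}) :=
        Nat.card_le_card_of_injective F hF
    _ = unitCard d ^ N := by
        rw [Nat.card_pi]; simp [unitCard]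

lemma numSAW_translate (x : Vtx d) (N : ℕ) : numSAW d x N = numSAW d 0 N := by
  apply Nat.card_congr
  refine ⟨fun ω => ⟨fun i => ω.1 i - x, ?_⟩, fun ω => ⟨fun i => ω.1 i + x, ?_⟩, ?_, ?_⟩
  · obtain ⟨h0, hinj, hadj⟩ := ω.2
    refine ⟨fun h => ?_, fun a b hab => ?_, fun i h => ?_⟩
    · dsimp only; rw [h0 h]; simp
    · dsimp only at hab; exact hinj (sub_left_inj.mp hab)
    · exact latAdj_sub (hadj i h)
  · obtain ⟨h0, hinj, hadj⟩ := ω.2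
    refine ⟨fun h => ?_, fun a b hab => ?_, fun i h => ?_⟩
    · dsimp only; rw [h0 h]; simp
    · dsimp only at hab; exact hinj ((add_left_inj x).mp hab)
    · have := latAdj_sub (v := -x) (hadj i h)
      simpa [sub_neg_eq_add] using this
  · intro ω; apply Subtype.ext; funext i; simp
  · intro ω; apply Subtype.ext; funext i; simp

lemma one_le_numSAW (hd : 1 ≤ d) (x : Vtx d) (N : ℕ) : 1 ≤ numSAW d x N := by
  rw [numSAW_translate]
  have hne : Nonempty {ω : Fin (N + 1) → Vtx d // IsSAWalk (0 : Vtx d) ω} := by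
    classical
    refine ⟨⟨fun i j => if (j : ℕ) = 0 then (i.1 : ℤ) else 0, ?_, ?_, ?_⟩⟩
    · intro h
      funext j
      simp
    · intro a b hab
      have h1 := congrFun hab (⟨0, hd⟩ : Fin d)
      norm_num at h1
      exact Fin.ext (by exact_mod_cast h1)
    · intro i h
      unfold latAdj
      rw [Finset.sum_eq_single (⟨0, hd⟩ : Fin d)]
      · simp only [Fin.val_mk, if_pos rfl]
        push_cast
        ring
      · intro b _ hb
        have hb0 : (b : ℕ) ≠ 0 := fun hc => hb (Fin.ext hc)
        simp [hb0]
      · intro hc; exact absurd (Finset.mem_univ _) hc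
  exact Nat.one_le_iff_ne_zero.mpr (Nat.card_ne_zero.mpr ⟨hne, inferInstance⟩)

end SectA
/-! ### Section B : the connective constant -/

section SectB

variable {d : ℕ}

/-- The sequence whose limsup is the connective constant. -/
noncomputable def sawSeq (d : ℕ) (N : ℕ) : ℝ := (numSAW d 0 N : ℝ) ^ ((N : ℝ)⁻¹)

lemma connConst_eq : connConst d = Filter.limsup (sawSeq d) Filter.atTop := rfl

lemma one_le_sawSeq (hd : 1 ≤ d) (N : ℕ) : 1 ≤ sawSeq d N :=
  Real.one_le_rpow (by exact_mod_cast one_le_numSAW hd 0 N) (by positivity)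

lemma one_le_unitCardR (hd : 1 ≤ d) : (1 : ℝ) ≤ (unitCard d : ℝ) := by
  exact_mod_cast one_le_unitCard hd

lemma sawSeq_le (hd : 1 ≤ d) (N : ℕ) : sawSeq d N ≤ (unitCard d : ℝ) := by
  rcases Nat.eq_zero_or_pos N with h | h
  · subst h
    simp only [sawSeq, Nat.cast_zero, inv_zero, Real.rpow_zero]
    exact one_le_unitCardR hd
  · have h1 : (numSAW d 0 N : ℝ) ≤ (unitCard d : ℝ) ^ N := by
      exact_mod_cast numSAW_le (0 : Vtx d) N
    have h2 : sawSeq d N ≤ ((unitCard d : ℝ) ^ N) ^ ((N : ℝ)⁻¹) :=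
      Real.rpow_le_rpow (by positivity) h1 (by positivity)
    calc sawSeq d N ≤ ((unitCard d : ℝ) ^ N) ^ ((N : ℝ)⁻¹) := h2
      _ = ((unitCard d : ℝ) ^ ((N : ℝ))) ^ ((N : ℝ)⁻¹) := by
          rw [Real.rpow_natCast]
      _ = (unitCard d : ℝ) ^ ((N : ℝ) * (N : ℝ)⁻¹) := by
          rw [← Real.rpow_mul (by positivity)]
      _ = (unitCard d : ℝ) := by
          rw [mul_inv_cancel₀ (by exact_mod_cast h.ne' : (N : ℝ) ≠ 0), Real.rpow_one]

lemma sawSeq_bddAbove (hd : 1 ≤ d) :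
    Filter.IsBoundedUnder (· ≤ ·) Filter.atTop (sawSeq d) :=
  Filter.isBoundedUnder_of ⟨(unitCard d : ℝ), fun N => sawSeq_le hd N⟩

lemma one_le_connConst (hd : 1 ≤ d) : 1 ≤ connConst d := by
  rw [connConst_eq]
  exact Filter.le_limsup_of_frequently_le
    (Filter.Frequently.of_forall (fun N => one_le_sawSeq hd N)) (sawSeq_bddAbove hd)

lemma connConst_pos (hd : 1 ≤ d) : 0 < connConst d :=
  lt_of_lt_of_le one_pos (one_le_connConst hd)

/-- Growth estimate : above the connective constant the number of SAWs grows at most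
geometrically. -/
lemma saw_growth (hd : 1 ≤ d) {ρ : ℝ} (hρ : connConst d < ρ) :
    ∃ C : ℝ, 1 ≤ C ∧ ∀ N, (numSAW d 0 N : ℝ) ≤ C * ρ ^ N := by
  have hρ1 : (1 : ℝ) ≤ ρ := le_trans (one_le_connConst hd) (le_of_lt hρ)
  have hev : ∀ᶠ N in Filter.atTop, sawSeq d N < ρ := by
    rw [connConst_eq] at hρ
    exact Filter.eventually_lt_of_limsup_lt hρ (sawSeq_bddAbove hd)
  obtain ⟨N₀, hN₀⟩ := Filter.eventually_atTop.1 hev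
  refine ⟨(unitCard d : ℝ) ^ N₀, one_le_pow₀ (one_le_unitCardR hd), fun N => ?_⟩
  have hC1 : (1 : ℝ) ≤ (unitCard d : ℝ) ^ N₀ := one_le_pow₀ (one_le_unitCardR hd)
  rcases lt_or_ge N N₀ with h | h
  · have h1 : (numSAW d 0 N : ℝ) ≤ (unitCard d : ℝ) ^ N := by
      exact_mod_cast numSAW_le (0 : Vtx d) N
    have h2 : (unitCard d : ℝ) ^ N ≤ (unitCard d : ℝ) ^ N₀ :=
      pow_le_pow_right₀ (one_le_unitCardR hd) (le_of_lt h)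
    have h3 : (1 : ℝ) ≤ ρ ^ N := one_le_pow₀ hρ1
    nlinarith [h1, h2, h3, hC1]
  · rcases Nat.eq_zero_or_pos N with h0 | h0
    · subst h0
      have : (numSAW d 0 0 : ℝ) ≤ (unitCard d : ℝ) ^ 0 := by
        exact_mod_cast numSAW_le (0 : Vtx d) 0
      simp only [pow_zero, mul_one] at this ⊢
      linarith
    · have h1 : sawSeq d N ≤ ρ := le_of_lt (hN₀ N h)
      have h2 : (numSAW d 0 N : ℝ) = (sawSeq d N) ^ (N : ℕ) := by
        rw [sawSeq, ← Real.rpow_natCast ((numSAW d 0 N : ℝ) ^ ((N : ℝ)⁻¹)) N,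
          ← Real.rpow_mul (by positivity), inv_mul_cancel₀
            (by exact_mod_cast h0.ne' : (N : ℝ) ≠ 0), Real.rpow_one]
      have h3 : (sawSeq d N) ^ (N : ℕ) ≤ ρ ^ N :=
        pow_le_pow_left₀ (le_trans zero_le_one (one_le_sawSeq hd N)) h1 N
      have h4 : ρ ^ N ≤ (unitCard d : ℝ) ^ N₀ * ρ ^ N := by
        nlinarith [hC1, pow_pos (lt_of_lt_of_le one_pos hρ1) N]
      linarith [h2 ▸ h3]
/-! ### Section C : configuration-space basics -/

section SectC

variable {d : ℕ}

open SimpleGraph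

lemma subgraph_eq_of_edgeSet {κ₁ κ₂ : (latticeGraph d).Subgraph}
    (h1 : κ₁.verts = κ₂.verts) (h2 : κ₁.edgeSet = κ₂.edgeSet) : κ₁ = κ₂ := by
  ext u v
  · rw [h1]
  · rw [← SimpleGraph.Subgraph.mem_edgeSet, ← SimpleGraph.Subgraph.mem_edgeSet, h2]

lemma edgeSet_finite_of_verts_finite {G : (latticeGraph d).Subgraph}
    (h : G.verts.Finite) : G.edgeSet.Finite := by
  apply Set.Finite.subset ((h.prod h).image (fun p => Sym2.mk p.1 p.2))
  intro e he
  induction e with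
  | _ u v =>
      have ha : G.Adj u v := (SimpleGraph.Subgraph.mem_edgeSet).1 he
      exact ⟨(u, v), ⟨ha.fst_mem, ha.snd_mem⟩, rfl⟩

lemma configs_finite {G : (latticeGraph d).Subgraph} (hG : IsFiniteDomain G) :
    (loopConfigs G).Finite := by
  have hE : G.edgeSet.Finite := edgeSet_finite_of_verts_finite hG.1
  apply Set.Finite.of_finite_image (f := fun κ => κ.edgeSet)
  · apply Set.Finite.subset hE.finite_subsets
    rintro S ⟨κ, hκ, rfl⟩
    exact SimpleGraph.Subgraph.edgeSet_mono hκ.1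
  · intro κ₁ h₁ κ₂ h₂ he
    exact subgraph_eq_of_edgeSet (h₁.2.1.trans h₂.2.1.symm) he

lemma config_edgeSet_finite {G κ : (latticeGraph d).Subgraph} (hG : IsFiniteDomain G)
    (hκ : κ ∈ loopConfigs G) : κ.edgeSet.Finite :=
  (edgeSet_finite_of_verts_finite hG.1).subset (SimpleGraph.Subgraph.edgeSet_mono hκ.1)

/-- The edgeless configuration on the vertex set of `G`. -/
def emptyConfig (G : (latticeGraph d).Subgraph) : (latticeGraph d).Subgraph where
  verts := G.verts
  Adj _ _ := False
  adj_sub h := h.elim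
  edge_vert h := h.elim
  symm := ⟨fun _ _ h => h⟩

lemma emptyConfig_mem (G : (latticeGraph d).Subgraph) : emptyConfig G ∈ loopConfigs G := by
  refine ⟨⟨subset_rfl, fun u v h => h.elim⟩, rfl, fun v _ => Or.inl ?_⟩
  have : (emptyConfig G).neighborSet v = ∅ := by
    ext u; simp [SimpleGraph.Subgraph.mem_neighborSet, emptyConfig]
  rw [this, Set.ncard_empty]

lemma emptyConfig_edgeSet (G : (latticeGraph d).Subgraph) :
    (emptyConfig G).edgeSet = ∅ := by
  ext e
  induction e with
  | _ u v => simp [SimpleGraph.Subgraph.mem_edgeSet, emptyConfig]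

lemma loopWt_emptyConfig (lam n : ℝ) (G : (latticeGraph d).Subgraph) :
    loopWt lam n (emptyConfig G) = 1 := by
  have h1 : numLoops (d := d) (emptyConfig G) = 0 := by
    have hset : {C : (emptyConfig G).spanningCoe.ConnectedComponent |
        ∃ e ∈ (emptyConfig G).edgeSet, ∀ v ∈ e, v ∈ C.supp} = ∅ := by
      ext C; simp [emptyConfig_edgeSet]
    rw [numLoops, hset, Set.ncard_empty]
  rw [loopWt, h1, emptyConfig_edgeSet, Set.ncard_empty]
  simp

lemma loopWt_pos {lam n : ℝ} (hl : 0 < lam) (hn : 0 < n) (κ : (latticeGraph d).Subgraph) :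
    0 < loopWt lam n κ :=
  mul_pos (pow_pos hl _) (pow_pos hn _)

lemma partitionZ_ge_one {lam n : ℝ} (hl : 0 < lam) (hn : 0 < n)
    {G : (latticeGraph d).Subgraph} (hG : IsFiniteDomain G) :
    1 ≤ partitionZ lam n G := by
  haveI : Finite (loopConfigs G) := (configs_finite hG).to_subtype
  letI : Fintype (loopConfigs G) := Fintype.ofFinite _
  rw [partitionZ, tsum_fintype]
  have := Finset.single_le_sum (f := fun κ : loopConfigs G => loopWt lam n κ.1)
    (fun κ _ => le_of_lt (loopWt_pos hl hn κ.1))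
    (Finset.mem_univ (⟨emptyConfig G, emptyConfig_mem G⟩ : loopConfigs G))
  dsimp only at this
  rw [loopWt_emptyConfig] at this
  exact this

lemma compEdgeSet_subset (κ : (latticeGraph d).Subgraph) (x : Vtx d) :
    compEdgeSet κ x ⊆ κ.edgeSet := fun _ he => he.1

lemma compLen_le {G κ : (latticeGraph d).Subgraph} (hG : IsFiniteDomain G)
    (hκ : κ ∈ loopConfigs G) (x : Vtx d) : compLen κ x ≤ G.edgeSet.ncard := by
  apply Set.ncard_le_ncard _ (edgeSet_finite_of_verts_finite hG.1)
  exact (compEdgeSet_subset κ x).trans (SimpleGraph.Subgraph.edgeSet_mono hκ.1)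

end SectC
/-! ### Section D : structure of loop components -/

section SectD

variable {d : ℕ}

open SimpleGraph

lemma subgraph_adj_irrefl {κ : (latticeGraph d).Subgraph} (v : Vtx d) : ¬ κ.Adj v v :=
  fun h => (latticeGraph d).loopless.irrefl v (κ.adj_sub h)

lemma walk_exists_adj {κ : (latticeGraph d).Subgraph} {u v : Vtx d}
    (w : κ.spanningCoe.Walk u v) (hu : ∃ y, κ.Adj u y) : ∃ y, κ.Adj v y := by
  induction w with
  | nil => exact hu
  | cons h p ih =>
      apply ih
      exact ⟨_, h.symm⟩

lemma walk_mem_closed {κ : (latticeGraph d).Subgraph} {S : Set (Vtx d)}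
    (hS : ∀ a b, a ∈ S → κ.Adj a b → b ∈ S) {u v : Vtx d}
    (w : κ.spanningCoe.Walk u v) (hu : u ∈ S) : v ∈ S := by
  induction w with
  | nil => exact hu
  | cons h p ih =>
      apply ih
      exact hS _ _ hu h

open Classical in
/-- The next vertex along a cycle: the neighbour of `c` different from `p`. -/
noncomputable def nextV (κ : (latticeGraph d).Subgraph) (x : Vtx d) (p c : Vtx d) : Vtx d :=
  if h : ∃ q, κ.Adj c q ∧ q ≠ p then h.choose else x

/-- The trajectory of the walk along the cycle through `x`, as pairs of consecutive
vertices. -/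
noncomputable def stepF (κ : (latticeGraph d).Subgraph) (x y0 : Vtx d) : ℕ → Vtx d × Vtx d
  | 0 => (x, y0)
  | (k+1) => ((stepF κ x y0 k).2, nextV κ x (stepF κ x y0 k).1 (stepF κ x y0 k).2)

/-- The trajectory of the walk along the cycle through `x`. -/
noncomputable def stepV (κ : (latticeGraph d).Subgraph) (x y0 : Vtx d) (k : ℕ) : Vtx d :=
  (stepF κ x y0 k).1

variable {G κ : (latticeGraph d).Subgraph} {x : Vtx d}

lemma stepV_zero (y0 : Vtx d) : stepV κ x y0 0 = x := rfl

lemma stepV_one (y0 : Vtx d) : stepV κ x y0 1 = y0 := rfl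

lemma stepV_two (y0 : Vtx d) (k : ℕ) :
    stepV κ x y0 (k + 2) = nextV κ x (stepV κ x y0 k) (stepV κ x y0 (k + 1)) := rfl

section Walks

variable (hG : IsFiniteDomain G) (hκ : κ ∈ loopConfigs G)

include hG hκ

lemma reach_deg2 (hx : ∃ y, κ.Adj x y) {v : Vtx d}
    (hr : κ.spanningCoe.Reachable x v) : (κ.neighborSet v).ncard = 2 := by
  obtain ⟨w⟩ := hr
  obtain ⟨y, hy⟩ := walk_exists_adj w hx
  have hvv : v ∈ κ.verts := κ.edge_vert hy
  have hfin : (κ.neighborSet v).Finite := by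
    apply Set.Finite.subset (hκ.2.1 ▸ hG.1 : κ.verts.Finite)
    exact fun u hu => SimpleGraph.Subgraph.Adj.snd_mem hu
  rcases hκ.2.2 v hvv with h0 | h2
  · exfalso
    have hmem : y ∈ κ.neighborSet v := hy
    rw [(Set.ncard_eq_zero hfin).1 h0] at hmem
    exact hmem
  · exact h2

lemma nbr_cases (hx : ∃ y, κ.Adj x y) {v a b : Vtx d}
    (hr : κ.spanningCoe.Reachable x v) (ha : κ.Adj v a) (hb : κ.Adj v b) (hab : a ≠ b)
    {c : Vtx d} (hc : κ.Adj v c) : c = a ∨ c = b := by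
  obtain ⟨p, q, hpq, hset⟩ := Set.ncard_eq_two.1 (reach_deg2 hG hκ hx hr)
  have hmem : ∀ {u : Vtx d}, κ.Adj v u → u = p ∨ u = q := by
    intro u hu
    have : u ∈ ({p, q} : Set (Vtx d)) := hset ▸ hu
    simpa using this
  rcases hmem ha with rfl | rfl <;> rcases hmem hb with rfl | rfl <;>
    rcases hmem hc with rfl | rfl <;> tauto

lemma nbr_unique (hx : ∃ y, κ.Adj x y) {v p q₁ q₂ : Vtx d}
    (hr : κ.spanningCoe.Reachable x v) (hp : κ.Adj v p)
    (h1 : κ.Adj v q₁) (h2 : κ.Adj v q₂) (hq1 : q₁ ≠ p) (hq2 : q₂ ≠ p) : q₁ = q₂ := by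
  obtain ⟨a, b, hab, hset⟩ := Set.ncard_eq_two.1 (reach_deg2 hG hκ hx hr)
  have hmem : ∀ {u : Vtx d}, κ.Adj v u → u = a ∨ u = b := by
    intro u hu
    have : u ∈ ({a, b} : Set (Vtx d)) := hset ▸ hu
    simpa using this
  rcases hmem hp with rfl | rfl <;> rcases hmem h1 with rfl | rfl <;>
    rcases hmem h2 with rfl | rfl <;> tauto

lemma nextV_spec (hx : ∃ y, κ.Adj x y) {p c : Vtx d}
    (hr : κ.spanningCoe.Reachable x c) (hadj : κ.Adj c p) :
    κ.Adj c (nextV κ x p c) ∧ nextV κ x p c ≠ p := by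
  have hex : ∃ q, κ.Adj c q ∧ q ≠ p := by
    obtain ⟨a, b, hab, hset⟩ := Set.ncard_eq_two.1 (reach_deg2 hG hκ hx hr)
    have hmem : ∀ {u : Vtx d}, u ∈ ({a, b} : Set (Vtx d)) → κ.Adj c u := by
      intro u hu
      have : u ∈ κ.neighborSet c := hset ▸ hu
      exact this
    have hpmem : p ∈ ({a, b} : Set (Vtx d)) := hset ▸ hadj
    simp only [Set.mem_insert_iff, Set.mem_singleton_iff] at hpmem
    rcases hpmem with rfl | rfl
    · exact ⟨b, hmem (by simp), hab.symm⟩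
    · exact ⟨a, hmem (by simp), hab⟩
  unfold nextV
  rw [dif_pos hex]
  exact hex.choose_spec

end Walks

end SectD
section SectD2

variable {d : ℕ}

open SimpleGraph

variable {G κ : (latticeGraph d).Subgraph} {x : Vtx d}

section Cycle

variable (hG : IsFiniteDomain G) (hκ : κ ∈ loopConfigs G) {y0 : Vtx d} (hy0 : κ.Adj x y0)

include hG hκ hy0

lemma step_invariant (k : ℕ) : κ.Adj (stepV κ x y0 k) (stepV κ x y0 (k+1)) ∧
    κ.spanningCoe.Reachable x (stepV κ x y0 k) := by
  induction k with
  | zero => exact ⟨hy0, SimpleGraph.Reachable.refl x⟩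
  | succ k ih =>
      have hr1 : κ.spanningCoe.Reachable x (stepV κ x y0 (k+1)) :=
        ih.2.trans (SimpleGraph.Adj.reachable (G := κ.spanningCoe) ih.1)
      refine ⟨?_, hr1⟩
      rw [stepV_two]
      exact (nextV_spec hG hκ ⟨y0, hy0⟩ hr1 ih.1.symm).1

lemma step_adj (k : ℕ) : κ.Adj (stepV κ x y0 k) (stepV κ x y0 (k+1)) :=
  (step_invariant hG hκ hy0 k).1

lemma step_reach (k : ℕ) : κ.spanningCoe.Reachable x (stepV κ x y0 k) :=
  (step_invariant hG hκ hy0 k).2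

lemma step_ne (k : ℕ) : stepV κ x y0 (k+2) ≠ stepV κ x y0 k := by
  rw [stepV_two]
  exact (nextV_spec hG hκ ⟨y0, hy0⟩ (step_reach hG hκ hy0 (k+1))
    (step_adj hG hκ hy0 k).symm).2

lemma step_rev (k m : ℕ) (h1 : stepV κ x y0 (k+1) = stepV κ x y0 (m+1))
    (h2 : stepV κ x y0 (k+2) = stepV κ x y0 (m+2)) : stepV κ x y0 k = stepV κ x y0 m := by
  apply nbr_unique hG hκ ⟨y0, hy0⟩ (v := stepV κ x y0 (k+1)) (p := stepV κ x y0 (k+2))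
    (step_reach hG hκ hy0 (k+1)) (step_adj hG hκ hy0 (k+1)) (step_adj hG hκ hy0 k).symm
  · rw [h1]
    exact (step_adj hG hκ hy0 m).symm
  · exact (step_ne hG hκ hy0 k).symm
  · rw [h2]
    exact (step_ne hG hκ hy0 m).symm

lemma step_rev_iter (t k m : ℕ) (h1 : stepV κ x y0 (k+t) = stepV κ x y0 (m+t))
    (h2 : stepV κ x y0 (k+t+1) = stepV κ x y0 (m+t+1)) :
    stepV κ x y0 k = stepV κ x y0 m := by
  induction t generalizing k m with
  | zero => exact h1
  | succ t ih =>
      exact ih k m (step_rev hG hκ hy0 (k+t) (m+t) h1 h2) h1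

lemma exists_return : ∃ t, 0 < t ∧ stepV κ x y0 t = x := by
  have hvfin : κ.verts.Finite := hκ.2.1 ▸ hG.1
  have hfin : (κ.verts ×ˢ κ.verts : Set (Vtx d × Vtx d)).Finite := hvfin.prod hvfin
  have hmap : Set.MapsTo (fun k => (stepV κ x y0 k, stepV κ x y0 (k+1)))
      (Set.univ : Set ℕ) (κ.verts ×ˢ κ.verts) := by
    intro k _
    exact ⟨κ.edge_vert (step_adj hG hκ hy0 k), κ.edge_vert (step_adj hG hκ hy0 k).symm⟩
  obtain ⟨k, -, m, -, hkm, heq⟩ :=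
    Set.infinite_univ.exists_ne_map_eq_of_mapsTo hmap hfin
  simp only [Prod.mk.injEq] at heq
  have key : ∀ a b : ℕ, a < b → stepV κ x y0 a = stepV κ x y0 b →
      stepV κ x y0 (a+1) = stepV κ x y0 (b+1) → ∃ t, 0 < t ∧ stepV κ x y0 t = x := by
    intro a b hab e1 e2
    refine ⟨b - a, by omega, ?_⟩
    have h1 : stepV κ x y0 ((b-a) + a) = stepV κ x y0 (0 + a) := by
      rw [show (b-a) + a = b by omega, show 0 + a = a by omega]
      exact e1.symm
    have h2 : stepV κ x y0 ((b-a) + a + 1) = stepV κ x y0 (0 + a + 1) := by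
      rw [show (b-a) + a + 1 = b + 1 by omega, show 0 + a + 1 = a + 1 by omega]
      exact e2.symm
    exact step_rev_iter hG hκ hy0 a (b-a) 0 h1 h2
  rcases lt_or_gt_of_ne hkm with h | h
  · exact key k m h heq.1 heq.2
  · exact key m k h heq.1.symm heq.2.symm

variable {T : ℕ} (hT0 : 0 < T) (hTx : stepV κ x y0 T = x)
  (hTmin : ∀ t, 0 < t → t < T → stepV κ x y0 t ≠ x)

include hT0 hTx hTmin

lemma T_ge_three : 3 ≤ T := by
  rcases (show T = 1 ∨ T = 2 ∨ 3 ≤ T by omega) with rfl | rfl | h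
  · exfalso
    have : κ.Adj x x := by
      have := hy0
      rw [show y0 = stepV κ x y0 1 from rfl, hTx] at this
      exact this
    exact subgraph_adj_irrefl x this
  · exact absurd hTx (step_ne hG hκ hy0 0)
  · exact h

lemma step_inj : ∀ i j, i < j → j < T → stepV κ x y0 i ≠ stepV κ x y0 j := by
  have main : ∀ g i j, j - i ≤ g → i < j → j < T → stepV κ x y0 i ≠ stepV κ x y0 j := by
    intro g
    induction g with
    | zero => intro i j hg hij _; omega
    | succ g ih =>
        intro i j hg hij hjT heq
        rcases Nat.eq_zero_or_pos i with rfl | hi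
        · exact hTmin j hij hjT heq.symm
        · rcases (show j = i+1 ∨ j = i+2 ∨ i+3 ≤ j by omega) with rfl | rfl | hj3
          · have := step_adj hG hκ hy0 i
            rw [← heq] at this
            exact subgraph_adj_irrefl _ this
          · exact step_ne hG hκ hy0 i heq.symm
          · have hA1 : κ.Adj (stepV κ x y0 i) (stepV κ x y0 (i+1)) := step_adj hG hκ hy0 i
            have hA2 : κ.Adj (stepV κ x y0 i) (stepV κ x y0 (i-1)) := by
              have := (step_adj hG hκ hy0 (i-1)).symm
              rwa [show i - 1 + 1 = i by omega] at this
            have hne12 : stepV κ x y0 (i+1) ≠ stepV κ x y0 (i-1) := by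
              have := step_ne hG hκ hy0 (i-1)
              rwa [show i - 1 + 2 = i + 1 by omega] at this
            have hAc : κ.Adj (stepV κ x y0 i) (stepV κ x y0 (j-1)) := by
              have := (step_adj hG hκ hy0 (j-1)).symm
              rw [show j - 1 + 1 = j by omega] at this
              rwa [← heq] at this
            rcases nbr_cases hG hκ ⟨y0, hy0⟩ (step_reach hG hκ hy0 i) hA1 hA2 hne12 hAc
              with hc | hc
            · exact ih (i+1) (j-1) (by omega) (by omega) (by omega) hc.symm
            · have h1 : stepV κ x y0 ((j-i) + (i-1)) = stepV κ x y0 (0 + (i-1)) := by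
                rw [show (j-i) + (i-1) = j - 1 by omega, show 0 + (i-1) = i - 1 by omega]
                exact hc
              have h2 : stepV κ x y0 ((j-i) + (i-1) + 1) = stepV κ x y0 (0 + (i-1) + 1) := by
                rw [show (j-i) + (i-1) + 1 = j by omega, show 0 + (i-1) + 1 = i by omega]
                exact heq.symm
              have h0 := step_rev_iter hG hκ hy0 (i-1) (j-i) 0 h1 h2
              exact hTmin (j-i) (by omega) (by omega) h0
  exact fun i j h1 h2 => main (j - i) i j le_rfl h1 h2

end Cycle

end SectD2
section SectD3

variable {d : ℕ}

open SimpleGraph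

variable {G κ : (latticeGraph d).Subgraph} {x : Vtx d}

section Cycle2

variable (hG : IsFiniteDomain G) (hκ : κ ∈ loopConfigs G) {y0 : Vtx d} (hy0 : κ.Adj x y0)
variable {T : ℕ} (hT0 : 0 < T) (hTx : stepV κ x y0 T = x)
  (hTmin : ∀ t, 0 < t → t < T → stepV κ x y0 t ≠ x)

include hG hκ hy0 hT0 hTx hTmin

lemma nbr_x {u : Vtx d} (hu : κ.Adj x u) :
    u = stepV κ x y0 1 ∨ u = stepV κ x y0 (T-1) := by
  have hT3 := T_ge_three hG hκ hy0 hT0 hTx hTmin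
  have hb : κ.Adj x (stepV κ x y0 (T-1)) := by
    have := (step_adj hG hκ hy0 (T-1)).symm
    rwa [show T - 1 + 1 = T by omega, hTx] at this
  have hab : stepV κ x y0 1 ≠ stepV κ x y0 (T-1) :=
    step_inj hG hκ hy0 hT0 hTx hTmin 1 (T-1) (by omega) (by omega)
  exact nbr_cases hG hκ ⟨y0, hy0⟩ (SimpleGraph.Reachable.refl x) hy0 hb hab hu

lemma nbr_step {k : ℕ} (hk0 : 0 < k) (hkT : k < T) {u : Vtx d}
    (hu : κ.Adj (stepV κ x y0 k) u) :
    u = stepV κ x y0 (k+1) ∨ u = stepV κ x y0 (k-1) := by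
  have hA1 : κ.Adj (stepV κ x y0 k) (stepV κ x y0 (k+1)) := step_adj hG hκ hy0 k
  have hA2 : κ.Adj (stepV κ x y0 k) (stepV κ x y0 (k-1)) := by
    have := (step_adj hG hκ hy0 (k-1)).symm
    rwa [show k - 1 + 1 = k by omega] at this
  have hne : stepV κ x y0 (k+1) ≠ stepV κ x y0 (k-1) := by
    have := step_ne hG hκ hy0 (k-1)
    rwa [show k - 1 + 2 = k + 1 by omega] at this
  exact nbr_cases hG hκ ⟨y0, hy0⟩ (step_reach hG hκ hy0 k) hA1 hA2 hne hu

lemma mem_steps {v : Vtx d} (hr : κ.spanningCoe.Reachable x v) :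
    ∃ k, k < T ∧ stepV κ x y0 k = v := by
  obtain ⟨w⟩ := hr
  refine walk_mem_closed (S := {v | ∃ k, k < T ∧ stepV κ x y0 k = v}) ?_ w ⟨0, hT0, rfl⟩
  rintro a b ⟨k, hk, rfl⟩ hab
  rcases Nat.eq_zero_or_pos k with rfl | hk0
  · rcases nbr_x hG hκ hy0 hT0 hTx hTmin hab with rfl | rfl
    · exact ⟨1, by have := T_ge_three hG hκ hy0 hT0 hTx hTmin; omega, rfl⟩
    · exact ⟨T-1, by omega, rfl⟩
  · rcases nbr_step hG hκ hy0 hT0 hTx hTmin hk0 hk hab with rfl | rfl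
    · rcases (show k+1 < T ∨ k+1 = T by omega) with h | h
      · exact ⟨k+1, h, rfl⟩
      · refine ⟨0, hT0, ?_⟩
        rw [h]
        exact hTx.symm
    · exact ⟨k-1, by omega, rfl⟩

lemma compEdgeSet_steps :
    compEdgeSet κ x =
      {e | ∃ k, k < T ∧ e = s(stepV κ x y0 k, stepV κ x y0 (k+1))} := by
  ext e
  constructor
  · intro he
    induction e with
    | _ u v =>
      have hadj : κ.Adj u v := (SimpleGraph.Subgraph.mem_edgeSet).1 he.1
      have hru : κ.spanningCoe.Reachable x u := he.2 u (Sym2.mem_mk_left u v)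
      obtain ⟨k, hk, rfl⟩ := mem_steps hG hκ hy0 hT0 hTx hTmin hru
      rcases Nat.eq_zero_or_pos k with rfl | hk0
      · rcases nbr_x hG hκ hy0 hT0 hTx hTmin hadj with rfl | rfl
        · exact ⟨0, hT0, rfl⟩
        · refine ⟨T-1, by omega, ?_⟩
          rw [show T - 1 + 1 = T by omega, hTx]
          exact Sym2.eq_swap
      · rcases nbr_step hG hκ hy0 hT0 hTx hTmin hk0 hk hadj with rfl | rfl
        · exact ⟨k, hk, rfl⟩
        · refine ⟨k-1, by omega, ?_⟩
          rw [show k - 1 + 1 = k by omega]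
          exact Sym2.eq_swap
  · rintro ⟨k, hk, rfl⟩
    refine ⟨(SimpleGraph.Subgraph.mem_edgeSet).2 (step_adj hG hκ hy0 k), ?_⟩
    intro v hv
    rcases Sym2.mem_iff.1 hv with rfl | rfl
    · exact step_reach hG hκ hy0 k
    · exact step_reach hG hκ hy0 (k+1)

lemma ncard_compEdgeSet_steps : (compEdgeSet κ x).ncard = T := by
  have hT3 := T_ge_three hG hκ hy0 hT0 hTx hTmin
  rw [compEdgeSet_steps hG hκ hy0 hT0 hTx hTmin]
  have himg : {e | ∃ k, k < T ∧ e = s(stepV κ x y0 k, stepV κ x y0 (k+1))} =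
      (fun k => s(stepV κ x y0 k, stepV κ x y0 (k+1))) '' ↑(Finset.range T) := by
    ext e
    simp only [Set.mem_setOf_eq, Set.mem_image, Finset.coe_range, Set.mem_Iio]
    constructor
    · rintro ⟨k, hk, rfl⟩; exact ⟨k, hk, rfl⟩
    · rintro ⟨k, hk, rfl⟩; exact ⟨k, hk, rfl⟩
  have hinj2 : ∀ a b, a < b → b < T →
      s(stepV κ x y0 a, stepV κ x y0 (a+1)) ≠ s(stepV κ x y0 b, stepV κ x y0 (b+1)) := by
    intro a b hab hbT he
    rcases Sym2.eq_iff.1 he with ⟨h1, _⟩ | ⟨h1, h2⟩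
    · exact step_inj hG hκ hy0 hT0 hTx hTmin a b hab hbT h1
    · rcases (show b + 1 < T ∨ b + 1 = T by omega) with h | h
      · exact step_inj hG hκ hy0 hT0 hTx hTmin a (b+1) (by omega) h h1
      · have hTx' : stepV κ x y0 (b+1) = stepV κ x y0 0 := by
          rw [h]; exact hTx
        have hx0 : stepV κ x y0 a = stepV κ x y0 0 := h1.trans hTx'
        have ha0 : a = 0 := by
          by_contra hne
          exact step_inj hG hκ hy0 hT0 hTx hTmin 0 a (by omega) (by omega) hx0.symm
        subst ha0
        rcases (show b = 1 ∨ 1 < b by omega) with rfl | hb1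
        · exact step_ne hG hκ hy0 0 h1.symm
        · exact step_inj hG hκ hy0 hT0 hTx hTmin 1 b hb1 hbT h2
  rw [himg, Set.ncard_image_of_injOn, Set.ncard_coe_finset, Finset.card_range]
  intro a ha b hb he
  simp only [Finset.coe_range, Set.mem_Iio] at ha hb
  rcases lt_trichotomy a b with h | h | h
  · exact absurd he (hinj2 a b h hb)
  · exact h
  · exact absurd he.symm (hinj2 b a h ha)

end Cycle2

/-- Structure theorem : the component of `x` with `N ≥ 1` edges is traced by a closed
self-avoiding walk of `N` vertices. -/
lemma comp_structure (hG : IsFiniteDomain G) (hκ : κ ∈ loopConfigs G) {N : ℕ}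
    (hN : compLen κ x = N) (hN1 : 1 ≤ N) :
    ∃ ω : Fin (N - 1 + 1) → Vtx d, IsSAWalk x ω ∧
      compEdgeSet κ x = {e | ∃ k : Fin (N - 1 + 1), e = s(ω k, ω (k + 1))} := by
  classical
  have hne : (compEdgeSet κ x).Nonempty := by
    apply Set.nonempty_of_ncard_ne_zero
    rw [show (compEdgeSet κ x).ncard = compLen κ x from rfl, hN]
    omega
  obtain ⟨e, he⟩ := hne
  have hxadj : ∃ y, κ.Adj x y := by
    clear hN
    induction e with
    | _ u v =>
      have hadj : κ.Adj u v := (SimpleGraph.Subgraph.mem_edgeSet).1 he.1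
      have hru : κ.spanningCoe.Reachable x u := he.2 u (Sym2.mem_mk_left u v)
      obtain ⟨w⟩ := hru.symm
      exact walk_exists_adj w ⟨v, hadj⟩
  obtain ⟨y0, hy0⟩ := hxadj
  have hret := exists_return hG hκ hy0
  set T := Nat.find hret with hTdef
  have hT := Nat.find_spec hret
  have hT0 : 0 < T := hT.1
  have hTx : stepV κ x y0 T = x := hT.2
  have hTmin : ∀ t, 0 < t → t < T → stepV κ x y0 t ≠ x := fun t h1 h2 hx =>
    Nat.find_min hret h2 ⟨h1, hx⟩
  have hT3 := T_ge_three hG hκ hy0 hT0 hTx hTmin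
  have hNT : N = T := by
    rw [← hN, show compLen κ x = (compEdgeSet κ x).ncard from rfl,
      ncard_compEdgeSet_steps hG hκ hy0 hT0 hTx hTmin]
  have hdim : N - 1 + 1 = T := by omega
  have hone : ((1 : Fin (N - 1 + 1)) : ℕ) = 1 := by
    rw [Fin.val_one']
    exact Nat.mod_eq_of_lt (by omega)
  have hval : ∀ k : Fin (N - 1 + 1), ((k + 1 : Fin (N - 1 + 1))).1 = (k.1 + 1) % (N - 1 + 1) := by
    intro k
    rw [Fin.add_def, hone]
  refine ⟨fun k => stepV κ x y0 k.1, ⟨fun h => rfl, ?_, ?_⟩, ?_⟩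
  · intro a b hab
    dsimp only at hab
    by_contra hne
    have ha : a.1 < T := by omega
    have hb : b.1 < T := by omega
    rcases lt_trichotomy a.1 b.1 with h | h | h
    · exact step_inj hG hκ hy0 hT0 hTx hTmin a.1 b.1 h hb hab
    · exact hne (Fin.ext h)
    · exact step_inj hG hκ hy0 hT0 hTx hTmin b.1 a.1 h ha hab.symm
  · intro i h
    exact κ.adj_sub (step_adj hG hκ hy0 i)
  · rw [compEdgeSet_steps hG hκ hy0 hT0 hTx hTmin]
    ext e'
    simp only [Set.mem_setOf_eq]
    constructor
    · rintro ⟨k, hk, rfl⟩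
      refine ⟨⟨k, by omega⟩, ?_⟩
      have h2 : ((⟨k, by omega⟩ : Fin (N - 1 + 1)) + 1).1 = (k + 1) % (N - 1 + 1) :=
        hval _
      rcases (show k + 1 < T ∨ k + 1 = T by omega) with h | h
      · have : ((⟨k, by omega⟩ : Fin (N - 1 + 1)) + 1).1 = k + 1 := by
          rw [h2, Nat.mod_eq_of_lt (by omega)]
        rw [this]
      · have : ((⟨k, by omega⟩ : Fin (N - 1 + 1)) + 1).1 = 0 := by
          rw [h2, show k + 1 = N - 1 + 1 by omega]
          exact Nat.mod_self _
        have hsw : stepV κ x y0 (k + 1) = stepV κ x y0 0 := by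
          rw [show k + 1 = T from h]; exact hTx
        rw [this, hsw]
    · rintro ⟨k, rfl⟩
      have hkT : k.1 < T := by omega
      have h2 : ((k + 1 : Fin (N - 1 + 1))).1 = (k.1 + 1) % (N - 1 + 1) := hval k
      rcases (show k.1 + 1 < T ∨ k.1 + 1 = T by omega) with h | h
      · refine ⟨k.1, hkT, ?_⟩
        have : ((k + 1 : Fin (N - 1 + 1))).1 = k.1 + 1 := by
          rw [h2, Nat.mod_eq_of_lt (by omega)]
        rw [this]
      · refine ⟨k.1, hkT, ?_⟩
        have h0 : ((k + 1 : Fin (N - 1 + 1))).1 = 0 := by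
          rw [h2, show k.1 + 1 = N - 1 + 1 by omega]
          exact Nat.mod_self _
        have hsw : stepV κ x y0 (k.1 + 1) = stepV κ x y0 0 := by
          rw [show k.1 + 1 = T from h]; exact hTx
        rw [h0, hsw]

end SectD3
/-! ### Section E : deleting the loop through `x` -/

section SectE

variable {d : ℕ}

open SimpleGraph

/-- The configuration obtained from `κ` by deleting the component of `x`. -/
def delComp (κ : (latticeGraph d).Subgraph) (x : Vtx d) : (latticeGraph d).Subgraph where
  verts := κ.verts
  Adj u v := κ.Adj u v ∧ ¬ κ.spanningCoe.Reachable x u ∧ ¬ κ.spanningCoe.Reachable x v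
  adj_sub h := κ.adj_sub h.1
  edge_vert h := κ.edge_vert h.1
  symm := ⟨fun u v h => ⟨κ.adj_symm h.1, h.2.2, h.2.1⟩⟩

variable {G κ : (latticeGraph d).Subgraph} {x : Vtx d}

lemma delComp_le : delComp κ x ≤ κ := ⟨subset_rfl, fun u v h => h.1⟩

lemma reach_of_adj {u v : Vtx d} (h : κ.Adj u v)
    (hr : κ.spanningCoe.Reachable x u) : κ.spanningCoe.Reachable x v :=
  hr.trans (SimpleGraph.Adj.reachable (G := κ.spanningCoe) h)

lemma delComp_nbr_of_not_reach {v : Vtx d} (hv : ¬ κ.spanningCoe.Reachable x v) :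
    (delComp κ x).neighborSet v = κ.neighborSet v := by
  ext u
  simp only [SimpleGraph.Subgraph.mem_neighborSet]
  constructor
  · exact fun h => h.1
  · intro h
    exact ⟨h, hv, fun hr => hv (reach_of_adj h.symm hr)⟩

lemma delComp_nbr_of_reach {v : Vtx d} (hv : κ.spanningCoe.Reachable x v) :
    (delComp κ x).neighborSet v = ∅ := by
  ext u
  simp only [SimpleGraph.Subgraph.mem_neighborSet]
  exact ⟨fun h => absurd hv h.2.1, fun h => h.elim⟩

lemma delComp_mem (hκ : κ ∈ loopConfigs G) : delComp κ x ∈ loopConfigs G := by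
  refine ⟨⟨hκ.1.1, fun u v h => hκ.1.2 h.1⟩, hκ.2.1, fun v hv => ?_⟩
  by_cases hr : κ.spanningCoe.Reachable x v
  · left
    rw [delComp_nbr_of_reach hr, Set.ncard_empty]
  · rw [delComp_nbr_of_not_reach hr]
    exact hκ.2.2 v hv

lemma delComp_edgeSet :
    (delComp κ x).edgeSet = κ.edgeSet \ compEdgeSet κ x := by
  ext e
  induction e with
  | _ u v =>
    simp only [SimpleGraph.Subgraph.mem_edgeSet, Set.mem_diff]
    constructor
    · rintro ⟨h, hu, hv⟩
      refine ⟨h, fun hc => hu (hc.2 u (Sym2.mem_mk_left u v))⟩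
    · rintro ⟨h, hc⟩
      have hu : ¬ κ.spanningCoe.Reachable x u := by
        intro hru
        apply hc
        refine ⟨(SimpleGraph.Subgraph.mem_edgeSet).2 h, fun w hw => ?_⟩
        rcases Sym2.mem_iff.1 hw with rfl | rfl
        · exact hru
        · exact reach_of_adj h hru
      refine ⟨h, hu, fun hrv => hu (reach_of_adj h.symm hrv)⟩

lemma delComp_ncard_edges (hG : IsFiniteDomain G) (hκ : κ ∈ loopConfigs G) :
    κ.edgeSet.ncard = (delComp κ x).edgeSet.ncard + compLen κ x := by
  rw [delComp_edgeSet]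
  have := Set.ncard_diff_add_ncard_of_subset (compEdgeSet_subset κ x)
    (config_edgeSet_finite hG hκ)
  rw [show compLen κ x = (compEdgeSet κ x).ncard from rfl]
  omega

/-- The set of loops of a configuration with finitely many edges is finite. -/
lemma lset_finite {κ : (latticeGraph d).Subgraph} (h : κ.edgeSet.Finite) :
    {C : κ.spanningCoe.ConnectedComponent |
      ∃ e ∈ κ.edgeSet, ∀ v ∈ e, v ∈ C.supp}.Finite := by
  classical
  set S := {C : κ.spanningCoe.ConnectedComponent | ∃ e ∈ κ.edgeSet, ∀ v ∈ e, v ∈ C.supp}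
  apply Set.Finite.of_finite_image
    (f := fun C => if h : ∃ e ∈ κ.edgeSet, ∀ v ∈ e, v ∈ C.supp then h.choose
      else s((0 : Vtx d), (0 : Vtx d)))
  · apply Set.Finite.subset h
    rintro e' ⟨C, hC, rfl⟩
    have hC' : ∃ e ∈ κ.edgeSet, ∀ v ∈ e, v ∈ C.supp := hC
    dsimp only
    rw [dif_pos hC']
    exact hC'.choose_spec.1
  · intro C₁ h₁ C₂ h₂ he
    have h₁' : ∃ e ∈ κ.edgeSet, ∀ v ∈ e, v ∈ C₁.supp := h₁
    have h₂' : ∃ e ∈ κ.edgeSet, ∀ v ∈ e, v ∈ C₂.supp := h₂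
    dsimp only at he
    rw [dif_pos h₁', dif_pos h₂'] at he
    have s1 := h₁'.choose_spec.2
    have s2 := h₂'.choose_spec.2
    rw [he] at s1
    have hv := h₂'.choose.out_fst_mem
    have m1 := s1 _ hv
    have m2 := s2 _ hv
    rw [SimpleGraph.ConnectedComponent.mem_supp_iff] at m1 m2
    rw [← m1]
    exact m2

lemma numLoops_delComp (hG : IsFiniteDomain G) (hκ : κ ∈ loopConfigs G)
    (hN1 : 1 ≤ compLen κ x) :
    numLoops κ = numLoops (delComp κ x) + 1 := by
  classical
  have hle : (delComp κ x).spanningCoe ≤ κ.spanningCoe := fun u v h => h.1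
  set φ : (delComp κ x).spanningCoe.ConnectedComponent →
      κ.spanningCoe.ConnectedComponent :=
    SimpleGraph.ConnectedComponent.map (SimpleGraph.Hom.ofLE hle) with hφ
  have hφmk : ∀ v : Vtx d, φ ((delComp κ x).spanningCoe.connectedComponentMk v) =
      κ.spanningCoe.connectedComponentMk v := fun v => rfl
  set Lκ := {C : κ.spanningCoe.ConnectedComponent |
    ∃ e ∈ κ.edgeSet, ∀ v ∈ e, v ∈ C.supp} with hLκ
  set Lκ' := {C : (delComp κ x).spanningCoe.ConnectedComponent |
    ∃ e ∈ (delComp κ x).edgeSet, ∀ v ∈ e, v ∈ C.supp} with hLκ'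
  have hreach_iff : ∀ u v : Vtx d, ¬ κ.spanningCoe.Reachable x u →
      κ.spanningCoe.Reachable u v → (delComp κ x).spanningCoe.Reachable u v := by
    intro u v hu hr
    obtain ⟨w⟩ := hr
    induction w with
    | nil => exact SimpleGraph.Reachable.refl _
    | @cons a b c h' p' ih =>
        have hb : ¬ κ.spanningCoe.Reachable x b := fun hrb =>
          hu (reach_of_adj (κ := κ) h'.symm hrb)
        refine (SimpleGraph.Adj.reachable
          (G := (delComp κ x).spanningCoe) ?_).trans (ih hb)
        exact ⟨h', hu, hb⟩
  -- endpoints of κ'-edges are not reachable from x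
  have hnotreach : ∀ e ∈ (delComp κ x).edgeSet, ∀ v ∈ e, ¬ κ.spanningCoe.Reachable x v := by
    intro e he
    induction e with
    | _ a b =>
      intro v hv
      have h' : (delComp κ x).Adj a b := (SimpleGraph.Subgraph.mem_edgeSet).1 he
      rcases Sym2.mem_iff.1 hv with rfl | rfl
      · exact h'.2.1
      · exact h'.2.2
  -- the component of x
  set Cx := κ.spanningCoe.connectedComponentMk x with hCx
  have hCxmem : Cx ∈ Lκ := by
    have hne : (compEdgeSet κ x).Nonempty := by
      apply Set.nonempty_of_ncard_ne_zero
      rw [show (compEdgeSet κ x).ncard = compLen κ x from rfl]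
      omega
    obtain ⟨e, he⟩ := hne
    refine ⟨e, he.1, fun v hv => ?_⟩
    rw [SimpleGraph.ConnectedComponent.mem_supp_iff, hCx,
      SimpleGraph.ConnectedComponent.eq]
    exact (he.2 v hv).symm
  have hCxnot : Cx ∉ φ '' Lκ' := by
    rintro ⟨C', hC', hCeq⟩
    obtain ⟨e', he', hall⟩ := hC'
    have hv := e'.out_fst_mem
    have hm := hall _ hv
    rw [SimpleGraph.ConnectedComponent.mem_supp_iff] at hm
    have : φ C' = κ.spanningCoe.connectedComponentMk e'.out.1 := by
      rw [← hm, hφmk]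
    rw [hCeq, hCx] at this
    rw [SimpleGraph.ConnectedComponent.eq] at this
    exact hnotreach e' he' _ hv this
  have hseteq : Lκ = insert Cx (φ '' Lκ') := by
    ext C
    constructor
    · intro hC
      by_cases hCeq : C = Cx
      · exact hCeq ▸ Set.mem_insert _ _
      · obtain ⟨e, he, hall⟩ := hC
        apply Set.mem_insert_of_mem
        induction e with
        | _ u v =>
          have hadj : κ.Adj u v := (SimpleGraph.Subgraph.mem_edgeSet).1 he
          have hmu : κ.spanningCoe.connectedComponentMk u = C := by
            rw [← SimpleGraph.ConnectedComponent.mem_supp_iff]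
            exact hall u (Sym2.mem_mk_left u v)
          have hu : ¬ κ.spanningCoe.Reachable x u := by
            intro hru
            apply hCeq
            rw [← hmu, hCx, SimpleGraph.ConnectedComponent.eq]
            exact hru.symm
          have hv : ¬ κ.spanningCoe.Reachable x v := fun hrv =>
            hu (reach_of_adj hadj.symm hrv)
          have hadj' : (delComp κ x).Adj u v := ⟨hadj, hu, hv⟩
          refine ⟨(delComp κ x).spanningCoe.connectedComponentMk u, ⟨s(u, v),
            (SimpleGraph.Subgraph.mem_edgeSet).2 hadj', fun w hw => ?_⟩, by rw [hφmk, hmu]⟩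
          rw [SimpleGraph.ConnectedComponent.mem_supp_iff,
            SimpleGraph.ConnectedComponent.eq]
          rcases Sym2.mem_iff.1 hw with rfl | rfl
          · exact SimpleGraph.Reachable.refl _
          · exact (SimpleGraph.Adj.reachable
              (G := (delComp κ x).spanningCoe) hadj').symm
    · intro hC
      rcases Set.mem_insert_iff.1 hC with rfl | ⟨C', hC', rfl⟩
      · exact hCxmem
      · obtain ⟨e', he', hall⟩ := hC'
        refine ⟨e', SimpleGraph.Subgraph.edgeSet_mono delComp_le he', fun v hv => ?_⟩
        have hm := hall v hv
        rw [SimpleGraph.ConnectedComponent.mem_supp_iff] at hm ⊢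
        rw [← hm, hφmk]
  have hinj : Set.InjOn φ Lκ' := by
    intro C₁ h₁ C₂ h₂ heq
    obtain ⟨e₁, he₁, hall₁⟩ := h₁
    obtain ⟨e₂, he₂, hall₂⟩ := h₂
    have hv₁ := e₁.out_fst_mem
    have hm₁ := hall₁ _ hv₁
    rw [SimpleGraph.ConnectedComponent.mem_supp_iff] at hm₁
    have hv₂ := e₂.out_fst_mem
    have hm₂ := hall₂ _ hv₂
    rw [SimpleGraph.ConnectedComponent.mem_supp_iff] at hm₂
    have hk : κ.spanningCoe.connectedComponentMk e₁.out.1 =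
        κ.spanningCoe.connectedComponentMk e₂.out.1 := by
      have t1 : φ C₁ = κ.spanningCoe.connectedComponentMk e₁.out.1 := by rw [← hm₁, hφmk]
      have t2 : φ C₂ = κ.spanningCoe.connectedComponentMk e₂.out.1 := by rw [← hm₂, hφmk]
      rw [← t1, ← t2, heq]
    rw [SimpleGraph.ConnectedComponent.eq] at hk
    have hnr : ¬ κ.spanningCoe.Reachable x e₁.out.1 := hnotreach e₁ he₁ _ hv₁
    have hr' := hreach_iff _ _ hnr hk
    rw [← hm₁, ← hm₂]
    rw [SimpleGraph.ConnectedComponent.eq]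
    exact hr'
  have hLfin : Lκ'.Finite :=
    lset_finite (((config_edgeSet_finite hG hκ).subset
      (SimpleGraph.Subgraph.edgeSet_mono delComp_le)))
  rw [numLoops, numLoops, ← hLκ, ← hLκ', hseteq,
    Set.ncard_insert_of_notMem hCxnot (hLfin.image φ),
    Set.ncard_image_of_injOn hinj]

end SectE
/-! ### Section F : the weight identity and fiber bound -/

section SectF

variable {d : ℕ}

open SimpleGraph

variable {G : (latticeGraph d).Subgraph} {x : Vtx d}

lemma loopWt_delComp {lam n : ℝ} {κ : (latticeGraph d).Subgraph}
    (hG : IsFiniteDomain G) (hκ : κ ∈ loopConfigs G) (hN1 : 1 ≤ compLen κ x) :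
    loopWt lam n κ = lam ^ (compLen κ x) * n * loopWt lam n (delComp κ x) := by
  rw [loopWt, loopWt, numLoops_delComp hG hκ hN1, delComp_ncard_edges hG hκ (x := x)]
  ring

lemma config_eq_of {κ₁ κ₂ : (latticeGraph d).Subgraph}
    (hκ₁ : κ₁ ∈ loopConfigs G) (hκ₂ : κ₂ ∈ loopConfigs G)
    (hE : compEdgeSet κ₁ x = compEdgeSet κ₂ x) (hD : delComp κ₁ x = delComp κ₂ x) :
    κ₁ = κ₂ := by
  apply subgraph_eq_of_edgeSet (hκ₁.2.1.trans hκ₂.2.1.symm)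
  have h1 : κ₁.edgeSet = (delComp κ₁ x).edgeSet ∪ compEdgeSet κ₁ x := by
    rw [delComp_edgeSet, Set.diff_union_of_subset (compEdgeSet_subset _ _)]
  have h2 : κ₂.edgeSet = (delComp κ₂ x).edgeSet ∪ compEdgeSet κ₂ x := by
    rw [delComp_edgeSet, Set.diff_union_of_subset (compEdgeSet_subset _ _)]
  rw [h1, h2, hE, hD]

/-- Abstract counting helper: if `(F1, F2)` is injective on `s` then the sum of `g ∘ F2`
over `s` is at most `|β|` times the total sum of `g`. -/
lemma sum_pair_le {α β γ : Type*} [Finite β] [Fintype γ] (s : Finset α)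
    (F1 : α → β) (F2 : α → γ)
    (hinj : ∀ a ∈ s, ∀ b ∈ s, F1 a = F1 b → F2 a = F2 b → a = b)
    (g : γ → ℝ) (hg : ∀ c, 0 ≤ g c) :
    ∑ a ∈ s, g (F2 a) ≤ (Nat.card β : ℝ) * ∑ c : γ, g c := by
  classical
  letI : Fintype β := Fintype.ofFinite β
  have h1 : ∑ a ∈ s, g (F2 a) = ∑ p ∈ s.image (fun a => (F1 a, F2 a)), g p.2 :=
    (Finset.sum_image (g := fun a => (F1 a, F2 a)) (f := fun p => g p.2)
      (fun a ha b hb h => hinj a ha b hb (congrArg Prod.fst h) (congrArg Prod.snd h))).symm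
  rw [h1]
  calc ∑ p ∈ s.image (fun a => (F1 a, F2 a)), g p.2
      ≤ ∑ p : β × γ, g p.2 :=
        Finset.sum_le_sum_of_subset_of_nonneg (Finset.subset_univ _) (fun p _ _ => hg p.2)
    _ = (Nat.card β : ℝ) * ∑ c : γ, g c := by
        rw [Fintype.sum_prod_type]
        dsimp only
        rw [Finset.sum_const, Finset.card_univ, nsmul_eq_mul, Nat.card_eq_fintype_card]

set_option maxHeartbeats 1000000 in
lemma fiber_bound (hd : 1 ≤ d) {lam n : ℝ} (hl : 0 < lam) (hn : 0 < n)
    (hG : IsFiniteDomain G) (x : Vtx d) {N : ℕ} (hN1 : 1 ≤ N) [Fintype (loopConfigs G)] :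
    ∑ κ ∈ Finset.univ.filter (fun κ : loopConfigs G => compLen κ.1 x = N),
        loopWt lam n κ.1
      ≤ lam ^ N * n * (numSAW d 0 (N - 1) : ℝ) * partitionZ lam n G := by
  classical
  letI : Fintype {ω : Fin (N - 1 + 1) → Vtx d // IsSAWalk x ω} := Fintype.ofFinite _
  have hne : Nonempty {ω : Fin (N - 1 + 1) → Vtx d // IsSAWalk x ω} := by
    have h1 : 1 ≤ numSAW d x (N - 1) := one_le_numSAW hd x (N - 1)
    have h2 : 0 < Nat.card {ω : Fin (N - 1 + 1) → Vtx d // IsSAWalk x ω} := h1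
    exact (Nat.card_pos_iff.1 h2).1
  set F := Finset.univ.filter (fun κ : loopConfigs G => compLen κ.1 x = N) with hF
  have hstr : ∀ κ : loopConfigs G, compLen κ.1 x = N →
      ∃ ω : Fin (N - 1 + 1) → Vtx d, IsSAWalk x ω ∧
        compEdgeSet κ.1 x = {e | ∃ k : Fin (N - 1 + 1), e = s(ω k, ω (k + 1))} :=
    fun κ h => comp_structure hG κ.2 h hN1
  set Ψ : loopConfigs G →
      ({ω : Fin (N - 1 + 1) → Vtx d // IsSAWalk x ω} × ↥(loopConfigs G)) := fun κ =>
    if h : compLen κ.1 x = N then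
      (⟨(hstr κ h).choose, (hstr κ h).choose_spec.1⟩,
        ⟨delComp κ.1 x, delComp_mem κ.2⟩)
    else (Classical.arbitrary _, κ) with hΨ
  have hΨinj : ∀ κ₁ ∈ F, ∀ κ₂ ∈ F, Ψ κ₁ = Ψ κ₂ → κ₁ = κ₂ := by
    intro κ₁ h₁ κ₂ h₂ heq
    rw [hF, Finset.mem_filter] at h₁ h₂
    rw [hΨ] at heq
    dsimp only at heq
    rw [dif_pos h₁.2, dif_pos h₂.2] at heq
    have hD : delComp κ₁.1 x = delComp κ₂.1 x :=
      congrArg (fun p => p.2.1) heq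
    have hE : compEdgeSet κ₁.1 x = compEdgeSet κ₂.1 x := by
      rw [(hstr κ₁ h₁.2).choose_spec.2, (hstr κ₂ h₂.2).choose_spec.2]
      have hω : (hstr κ₁ h₁.2).choose = (hstr κ₂ h₂.2).choose :=
        congrArg (fun p => p.1.1) heq
      rw [hω]
    exact Subtype.ext (config_eq_of κ₁.2 κ₂.2 hE hD)
  have hwt : ∀ κ ∈ F, loopWt lam n κ.1 = lam ^ N * n * loopWt lam n ((Ψ κ).2).1 := by
    intro κ hκF
    rw [hF, Finset.mem_filter] at hκF
    rw [hΨ]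
    dsimp only
    rw [dif_pos hκF.2]
    have := loopWt_delComp (lam := lam) (n := n) hG κ.2
      (x := x) (by rw [hκF.2]; exact hN1)
    have hc := hκF.2
    rw [hc] at this
    rw [this]
  have hZ : partitionZ lam n G = ∑ κ' : loopConfigs G, loopWt lam n κ'.1 := by
    rw [partitionZ, tsum_fintype]
  calc ∑ κ ∈ F, loopWt lam n κ.1
      = ∑ κ ∈ F, lam ^ N * n * loopWt lam n ((Ψ κ).2).1 := Finset.sum_congr rfl hwt
    _ = lam ^ N * n * ∑ κ ∈ F, loopWt lam n ((Ψ κ).2).1 := by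
        rw [Finset.mul_sum]
    _ ≤ lam ^ N * n * ((Nat.card {ω : Fin (N - 1 + 1) → Vtx d // IsSAWalk x ω} : ℝ) *
          ∑ κ' : loopConfigs G, loopWt lam n κ'.1) := by
        apply mul_le_mul_of_nonneg_left ?_ (by positivity)
        exact sum_pair_le F (fun κ => (Ψ κ).1) (fun κ => (Ψ κ).2)
          (fun a ha b hb h1 h2 => hΨinj a ha b hb (Prod.ext h1 h2))
          (fun κ' => loopWt lam n κ'.1) (fun κ' => le_of_lt (loopWt_pos hl hn _))
    _ = lam ^ N * n * (numSAW d 0 (N - 1) : ℝ) * partitionZ lam n G := by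
        rw [← hZ, ← numSAW_translate x (N - 1), numSAW]
        ring

end SectF
/-! ### Section G : uniform bound on the exponential moment -/

section SectG

variable {d : ℕ}

open SimpleGraph

lemma geom_tail_le {q : ℝ} (hq0 : 0 ≤ q) (hq1 : q < 1) (E : ℕ) :
    ∑ i ∈ Finset.range E, q ^ i ≤ 1 / (1 - q) := by
  have hmul := geom_sum_mul q E
  have h1 : (∑ i ∈ Finset.range E, q ^ i) * (1 - q) = 1 - q ^ E := by
    linear_combination (-1 : ℝ) * hmul
  rw [le_div_iff₀ (by linarith : (0:ℝ) < 1 - q)]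
  have h2 : (0:ℝ) ≤ q ^ E := pow_nonneg hq0 E
  linarith [h1]

lemma expMoment_le {G : (latticeGraph d).Subgraph} {x : Vtx d} (hd : 1 ≤ d)
    {lam n δ C ρ : ℝ} (hl : 0 < lam) (hn : 0 < n) (hδ : 0 < δ) (hC : 1 ≤ C) (hρ : 1 ≤ ρ)
    (hgrow : ∀ M : ℕ, (numSAW d 0 M : ℝ) ≤ C * ρ ^ M)
    (hq1 : Real.exp δ * (lam * ρ) < 1) (hG : IsFiniteDomain G) :
    expMoment δ lam n G x ≤
      1 + n * C * lam * Real.exp δ * (1 / (1 - Real.exp δ * (lam * ρ))) := by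
  classical
  set q : ℝ := Real.exp δ * (lam * ρ) with hqdef
  have hq0 : 0 ≤ q := by positivity
  set B : ℝ := 1 + n * C * lam * Real.exp δ * (1 / (1 - q)) with hBdef
  have hBpos : 0 ≤ B := by
    have h2 : (0:ℝ) < 1 - q := by linarith
    rw [hBdef]
    positivity
  haveI : Finite (loopConfigs G) := (configs_finite hG).to_subtype
  letI : Fintype (loopConfigs G) := Fintype.ofFinite _
  have hZ1 : 1 ≤ partitionZ lam n G := partitionZ_ge_one hl hn hG
  have hZpos : 0 < partitionZ lam n G := lt_of_lt_of_le one_pos hZ1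
  set Z := partitionZ lam n G with hZdef
  set f : loopConfigs G → ℝ :=
    fun κ => Real.exp (δ * (compLen κ.1 x : ℝ)) * loopWt lam n κ.1 with hfdef
  have hfnn : ∀ κ, 0 ≤ f κ := fun κ =>
    le_of_lt (mul_pos (Real.exp_pos _) (loopWt_pos hl hn _))
  have hexp : expMoment δ lam n G x = (∑ κ : loopConfigs G, f κ) / Z := by
    rw [expMoment, tsum_fintype]
  set E := G.edgeSet.ncard with hEdef
  have hmaps : ∀ κ : loopConfigs G, κ ∈ Finset.univ →
      compLen κ.1 x ∈ Finset.range (E + 1) := by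
    intro κ _
    rw [Finset.mem_range]
    have := compLen_le hG κ.2 x
    omega
  have hfib : ∑ N ∈ Finset.range (E + 1),
      ∑ κ ∈ Finset.univ.filter (fun κ : loopConfigs G => compLen κ.1 x = N), f κ
      = ∑ κ : loopConfigs G, f κ :=
    Finset.sum_fiberwise_of_maps_to hmaps f
  set A : ℕ → ℝ := fun N =>
    ∑ κ ∈ Finset.univ.filter (fun κ : loopConfigs G => compLen κ.1 x = N), f κ with hAdef
  have hA0 : A 0 ≤ Z := by
    have h1 : A 0 = ∑ κ ∈ Finset.univ.filter
        (fun κ : loopConfigs G => compLen κ.1 x = 0), loopWt lam n κ.1 := by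
      apply Finset.sum_congr rfl
      intro κ hκ
      rw [hfdef]
      dsimp only
      rw [(Finset.mem_filter.1 hκ).2]
      simp
    rw [h1, hZdef, partitionZ, tsum_fintype]
    exact Finset.sum_le_sum_of_subset_of_nonneg (Finset.filter_subset _ _)
      (fun κ _ _ => le_of_lt (loopWt_pos hl hn _))
  have hAi : ∀ i : ℕ, A (i + 1) ≤ n * C * (Real.exp δ * lam) * q ^ i * Z := by
    intro i
    have h1 : A (i + 1) = Real.exp (δ * (i + 1 : ℕ)) *
        ∑ κ ∈ Finset.univ.filter
          (fun κ : loopConfigs G => compLen κ.1 x = i + 1), loopWt lam n κ.1 := by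
      rw [Finset.mul_sum]
      apply Finset.sum_congr rfl
      intro κ hκ
      rw [hfdef]
      dsimp only
      rw [(Finset.mem_filter.1 hκ).2]
    have h2 := fiber_bound hd hl hn hG x (N := i + 1) (by omega)
    have h3 : (numSAW d 0 (i + 1 - 1) : ℝ) ≤ C * ρ ^ i := by
      have := hgrow i
      simpa using this
    have hexp1 : Real.exp (δ * (i + 1 : ℕ)) = Real.exp δ ^ (i + 1) := by
      rw [← Real.exp_nat_mul]
      congr 1
      push_cast
      ring
    have h4 : A (i + 1) ≤ Real.exp δ ^ (i + 1) * (lam ^ (i + 1) * n * (C * ρ ^ i) * Z) := by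
      rw [h1, hexp1]
      apply mul_le_mul_of_nonneg_left ?_ (by positivity)
      calc ∑ κ ∈ Finset.univ.filter
            (fun κ : loopConfigs G => compLen κ.1 x = i + 1), loopWt lam n κ.1
          ≤ lam ^ (i + 1) * n * (numSAW d 0 (i + 1 - 1) : ℝ) * Z := h2
        _ ≤ lam ^ (i + 1) * n * (C * ρ ^ i) * Z := by
            apply mul_le_mul_of_nonneg_right ?_ (le_of_lt hZpos)
            apply mul_le_mul_of_nonneg_left h3 (by positivity)
        _ = lam ^ (i + 1) * n * (C * ρ ^ i) * Z := rfl
    calc A (i + 1) ≤ Real.exp δ ^ (i + 1) * (lam ^ (i + 1) * n * (C * ρ ^ i) * Z) := h4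
      _ = n * C * (Real.exp δ * lam) * q ^ i * Z := by
          rw [hqdef, show Real.exp δ * (lam * ρ) = Real.exp δ * lam * ρ by ring,
            mul_pow, mul_pow, pow_succ, pow_succ]
          ring
  have hsum : ∑ κ : loopConfigs G, f κ ≤ B * Z := by
    rw [← hfib, Finset.sum_range_succ']
    have hgeo := geom_tail_le hq0 (by rw [hqdef]; exact hq1) E
    have h5 : ∑ i ∈ Finset.range E, A (i + 1)
        ≤ n * C * (Real.exp δ * lam) * (1 / (1 - q)) * Z := by
      calc ∑ i ∈ Finset.range E, A (i + 1)
          ≤ ∑ i ∈ Finset.range E, n * C * (Real.exp δ * lam) * q ^ i * Z :=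
            Finset.sum_le_sum (fun i _ => hAi i)
        _ = n * C * (Real.exp δ * lam) * Z * ∑ i ∈ Finset.range E, q ^ i := by
            rw [Finset.mul_sum]
            apply Finset.sum_congr rfl
            intro i _
            ring
        _ ≤ n * C * (Real.exp δ * lam) * Z * (1 / (1 - q)) := by
            apply mul_le_mul_of_nonneg_left hgeo (by positivity)
        _ = n * C * (Real.exp δ * lam) * (1 / (1 - q)) * Z := by ring
    have h6 : A 0 ≤ Z := hA0
    rw [hBdef]
    have : (1 + n * C * lam * Real.exp δ * (1 / (1 - q))) * Z
        = n * C * (Real.exp δ * lam) * (1 / (1 - q)) * Z + Z := by ring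
    rw [this]
    exact add_le_add h5 h6
  rw [hexp, div_le_iff₀ hZpos]
  exact hsum

end SectG
/-- Below `1/μ` the loop length admits uniformly bounded exponential moments; consequently
`λ_c(n) ≥ 1/μ` for every `n ∈ (0,∞)`. -/
theorem lambdaC_ge_inverse_mu (d : ℕ) (hd : 2 ≤ d) (n : ℝ) (hn : 0 < n) :
    (∀ lam : ℝ, 0 < lam → lam < 1 / connConst d →
        ∃ δ : ℝ, 0 < δ ∧ mathcalL d δ lam n < ⊤) ∧
      ENNReal.ofReal (1 / connConst d) ≤ lambdaC d n := by
  have hd1 : 1 ≤ d := by omega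
  have hμ1 : 1 ≤ connConst d := one_le_connConst hd1
  have hμ0 : 0 < connConst d := connConst_pos hd1
  have main : ∀ lam : ℝ, 0 < lam → lam < 1 / connConst d →
      ∃ δ : ℝ, 0 < δ ∧ mathcalL d δ lam n < ⊤ := by
    intro lam hl hlt
    have hlam_mu : lam * connConst d < 1 := by
      rw [lt_div_iff₀ hμ0] at hlt
      linarith
    set ρ : ℝ := (connConst d + 1 / lam) / 2 with hρdef
    have hmuinv : connConst d < 1 / lam := by
      rw [lt_div_iff₀ hl]
      nlinarith [hlam_mu]
    have hρgt : connConst d < ρ := by rw [hρdef]; linarith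
    have hρlt : ρ < 1 / lam := by rw [hρdef]; linarith
    have hρ1 : 1 ≤ ρ := le_of_lt (lt_of_le_of_lt hμ1 hρgt)
    have hρ0 : 0 < ρ := lt_of_lt_of_le one_pos hρ1
    have hlamρ : lam * ρ < 1 := by
      have h := (lt_div_iff₀ hl).1 hρlt
      nlinarith [h]
    have hlamρ0 : 0 < lam * ρ := mul_pos hl hρ0
    obtain ⟨C, hC1, hgrow⟩ := saw_growth hd1 hρgt
    set L : ℝ := Real.log (lam * ρ) with hLdef
    have hL : L < 0 := Real.log_neg hlamρ0 hlamρ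
    refine ⟨-L / 2, by linarith, ?_⟩
    have hq : Real.exp (-L / 2) * (lam * ρ) < 1 := by
      rw [show lam * ρ = Real.exp L from (Real.exp_log hlamρ0).symm, ← Real.exp_add]
      have hlt0 : -L / 2 + L < 0 := by linarith
      calc Real.exp (-L / 2 + L) < Real.exp 0 := Real.exp_lt_exp.2 hlt0
        _ = 1 := Real.exp_zero
    set B : ℝ := 1 + n * C * lam * Real.exp (-L / 2) *
      (1 / (1 - Real.exp (-L / 2) * (lam * ρ))) with hBdef
    have hbound : mathcalL d (-L / 2) lam n ≤ ENNReal.ofReal B := by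
      unfold mathcalL
      refine iSup_le fun G => iSup_le fun hG => iSup_le fun x => iSup_le fun hx => ?_
      exact ENNReal.ofReal_le_ofReal
        (expMoment_le hd1 hl hn (by linarith) hC1 hρ1 hgrow hq hG)
    exact lt_of_le_of_lt hbound ENNReal.ofReal_lt_top
  refine ⟨main, ?_⟩
  rcases le_or_gt (1 / connConst d) 0 with h0 | h0
  · rw [ENNReal.ofReal_of_nonpos h0]
    exact zero_le
  · apply le_of_forall_lt
    intro c hc
    have hcne : c ≠ ⊤ := ne_top_of_lt (lt_of_lt_of_le hc le_top)
    have hct : c.toReal < 1 / connConst d := by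
      have h1 := ENNReal.toReal_strict_mono (by simp) hc
      rwa [ENNReal.toReal_ofReal h0.le] at h1
    set m := max c.toReal 0 with hmdef
    set lam := (m + 1 / connConst d) / 2 with hlamdef
    have hm0 : 0 ≤ m := le_max_right _ _
    have hmlt : m < 1 / connConst d := max_lt hct h0
    have h1 : 0 < lam := by rw [hlamdef]; linarith
    have h2 : lam < 1 / connConst d := by rw [hlamdef]; linarith
    have h3 : c.toReal < lam := by
      have := le_max_left c.toReal 0
      rw [hlamdef]
      linarith
    obtain ⟨δ, hδ, hfin⟩ := main lam h1 h2
    have hqual : ENNReal.ofReal lam ≤ lambdaC d n := by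
      unfold lambdaC
      exact le_iSup₂_of_le lam ⟨h1.le, δ, hδ, hfin⟩ le_rfl
    calc c = ENNReal.ofReal c.toReal := (ENNReal.ofReal_toReal hcne).symm
      _ < ENNReal.ofReal lam := by
          rw [ENNReal.ofReal_lt_ofReal_iff h1]
          exact h3
      _ ≤ lambdaC d n := hqual
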